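/- Let O = ℤ[λ] be an order in the number field K with ring of integers O_K, let A, B be nonzero ideals of O with extensions 𝔄 = O_{(M)}·A and 𝔅 = O_{(M)}·B to the localization at powers of λ. If 𝔄 and 𝔅 are equivalent (ξ𝔄 = 𝔅 for some ξ ∈ K^×), then in the class group Cl(O_K) one has [O_K·A] ≡ [O_K·B] modulo the subgroup generated by the classes of the prime ideals Q_j of O_K dividing O_K·λ. -/

import Mathlib

noncomputable section

/-- `ℤ[λ]`, the subring of `K` generated by `λ`. -/
def orderGen {K : Type} [Field K] (lam : K) : Subring K := Subring.closure {lam}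

theorem lam_mem_orderGen {K : Type} [Field K] (lam : K) : lam ∈ orderGen lam :=
  Subring.subset_closure (Set.mem_singleton lam)

/-- The localization of `ℤ[λ]` at the multiplicative set `M = {1, λ, λ², …}`,
viewed inside `K`. -/
def locSubring {K : Type} [Field K] (lam : K) (hlam : lam ≠ 0) : Subring K where
  carrier := {x : K | ∃ a ∈ orderGen lam, ∃ k : ℕ, x = a / lam ^ k}
  one_mem' := ⟨1, one_mem _, 0, by simp⟩
  zero_mem' := ⟨0, zero_mem _, 0, by simp⟩
  neg_mem' := by
    rintro x ⟨a, ha, k, rfl⟩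
    exact ⟨-a, neg_mem ha, k, by ring⟩
  mul_mem' := by
    rintro x y ⟨a, ha, k, rfl⟩ ⟨b, hb, m, rfl⟩
    exact ⟨a * b, mul_mem ha hb, k + m, by rw [pow_add, div_mul_div_comm]⟩
  add_mem' := by
    rintro x y ⟨a, ha, k, rfl⟩ ⟨b, hb, m, rfl⟩
    refine ⟨a * lam ^ m + b * lam ^ k, ?_, k + m, ?_⟩
    · exact add_mem (mul_mem ha (pow_mem (lam_mem_orderGen lam) m))
        (mul_mem hb (pow_mem (lam_mem_orderGen lam) k))
    · rw [pow_add, div_add_div _ _ (pow_ne_zero k hlam) (pow_ne_zero m hlam)]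
      ring_nf

theorem orderGen_le_locSubring {K : Type} [Field K] (lam : K) (hlam : lam ≠ 0) :
    orderGen lam ≤ locSubring lam hlam := fun x hx => ⟨x, hx, 0, by simp⟩

/-- The underlying subset of `K` of an ideal of a subring of `K`. -/
def idealSet {K : Type} [Field K] (R : Subring K) (I : Ideal R) : Set K :=
  Subtype.val '' (I : Set R)

/-- The fractional ideal `(A : B) = {ξ ∈ K ∣ ξB ⊆ A}` as a subset of `K`. -/
def colonSet {K : Type} [Field K] (R : Subring K) (A B : Ideal R) : Set K :=
  {x : K | ∀ b : R, b ∈ B → ∃ a : R, a ∈ A ∧ (a : K) = x * (b : K)}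


/-- Saturation of an ideal with respect to powers of an element. -/
def idealSat {R : Type*} [CommRing R] (x : R) (J : Ideal R) : Ideal R where
  carrier := {y | ∃ N : ℕ, x ^ N * y ∈ J}
  zero_mem' := ⟨0, by simp⟩
  add_mem' := by
    rintro a b ⟨N, hN⟩ ⟨M, hM⟩
    refine ⟨N + M, ?_⟩
    have h : x ^ (N + M) * (a + b) = x ^ M * (x ^ N * a) + x ^ N * (x ^ M * b) := by
      rw [pow_add]; ring
    rw [h]
    exact add_mem (J.mul_mem_left _ hN) (J.mul_mem_left _ hM)
  smul_mem' := by
    rintro c y ⟨N, hN⟩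
    refine ⟨N, ?_⟩
    have h : x ^ N * (c • y) = c * (x ^ N * y) := by simp only [smul_eq_mul]; ring
    rw [h]
    exact J.mul_mem_left _ hN

theorem mem_idealSat {R : Type*} [CommRing R] {x : R} {J : Ideal R} {y : R} :
    y ∈ idealSat x J ↔ ∃ N : ℕ, x ^ N * y ∈ J := Iff.rfl

theorem idealSat_mono_pow {R : Type*} [CommRing R] {x : R} {J : Ideal R} {y : R} {n m : ℕ}
    (hnm : n ≤ m) (h : x ^ n * y ∈ J) : x ^ m * y ∈ J := by
  have hh : x ^ m * y = x ^ (m - n) * (x ^ n * y) := by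
    rw [← mul_assoc, ← pow_add, Nat.sub_add_cancel hnm]
  rw [hh]
  exact J.mul_mem_left _ h

theorem idealSat_uniform {R : Type*} [CommRing R] [IsNoetherianRing R] (x : R) (J : Ideal R) :
    ∃ N : ℕ, ∀ y ∈ idealSat x J, x ^ N * y ∈ J := by
  obtain ⟨S, hS⟩ := IsNoetherian.noetherian (idealSat x J)
  classical
  set g : R → ℕ := fun s => if h : ∃ N : ℕ, x ^ N * s ∈ J then h.choose else 0 with hg
  refine ⟨S.sup g, ?_⟩
  have hgen : ∀ s ∈ (S : Set R), x ^ S.sup g * s ∈ J := by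
    intro s hs
    have hmem : s ∈ idealSat x J := hS ▸ Submodule.subset_span hs
    obtain ⟨n, hn⟩ := hmem
    have hex : ∃ N : ℕ, x ^ N * s ∈ J := ⟨n, hn⟩
    have h1 : x ^ g s * s ∈ J := by rw [hg]; simp only [dif_pos hex]; exact hex.choose_spec
    exact idealSat_mono_pow (Finset.le_sup (by simpa using hs)) h1
  intro y hy
  rw [← hS] at hy
  induction hy using Submodule.span_induction with
  | mem z hz => exact hgen z hz
  | zero => simpa using J.zero_mem
  | add a b _ _ ha hb => rw [mul_add]; exact add_mem ha hb
  | smul c a _ ha =>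
      have h : x ^ S.sup g * (c • a) = c * (x ^ S.sup g * a) := by
        simp only [smul_eq_mul]; ring
      rw [h]; exact J.mul_mem_left _ ha

open nonZeroDivisors in
set_option synthInstance.maxHeartbeats 1000000 in
set_option maxHeartbeats 1000000 in
theorem mk0_mem_closure_of_dvd_span_pow {R : Type*} [CommRing R] [IsDedekindDomain R]
    (lamO : R) (m : ℕ) :
    ∀ C : Ideal R, C ∣ Ideal.span {lamO ^ m} →
      ∀ hC : C ∈ (Ideal R)⁰,
        ClassGroup.mk0 ⟨C, hC⟩ ∈
          Subgroup.closure {c : ClassGroup R |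
            ∃ Q : Ideal R, Q.IsPrime ∧ lamO ∈ Q ∧
              ∃ hQ : Q ∈ (Ideal R)⁰, c = ClassGroup.mk0 ⟨Q, hQ⟩} := by
  intro C
  induction C using UniqueFactorizationMonoid.induction_on_prime with
  | h₁ =>
      intro _ hC
      have h10 : (1 : Ideal R) * 0 = 0 := by simp
      have h2 : (1 : Ideal R) = 0 := absurd rfl (mem_nonZeroDivisors_iff_ne_zero.mp hC)
      rw [Ideal.one_eq_top, Ideal.zero_eq_bot] at h2
      exact absurd h2 top_ne_bot
  | h₂ C hC =>
      intro _ hC0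
      have hCtop : C = ⊤ := Ideal.isUnit_iff.mp hC
      subst hCtop
      have h1 : (⟨⊤, hC0⟩ : (Ideal R)⁰) = 1 := Subtype.ext (Ideal.one_eq_top).symm
      rw [h1, map_one]
      exact one_mem _
  | h₃ C p hC0 hp ih =>
      intro hdvd hmem
      have hp0 : p ∈ (Ideal R)⁰ := mem_nonZeroDivisors_iff_ne_zero.mpr hp.ne_zero
      have hC0' : C ∈ (Ideal R)⁰ := mem_nonZeroDivisors_iff_ne_zero.mpr hC0
      have hsplit : (⟨p * C, hmem⟩ : (Ideal R)⁰) = ⟨p, hp0⟩ * ⟨C, hC0'⟩ := rfl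
      rw [hsplit, map_mul]
      refine mul_mem (Subgroup.subset_closure ?_) (ih (dvd_trans (dvd_mul_left C p) hdvd) hC0')
      have hpP : p.IsPrime := Ideal.isPrime_of_prime hp
      refine ⟨p, hpP, ?_, hp0, rfl⟩
      have hle : Ideal.span {lamO ^ m} ≤ p :=
        Ideal.le_of_dvd (dvd_trans (dvd_mul_right p C) hdvd)
      exact hpP.mem_of_pow_mem m (hle (Ideal.mem_span_singleton_self _))

theorem mem_map_loc {K : Type} [Field K] {lam : K} (hlam : lam ≠ 0)
    (B : Ideal (orderGen lam)) (z : locSubring lam hlam)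
    (hz : z ∈ Ideal.map (Subring.inclusion (orderGen_le_locSubring lam hlam)) B) :
    ∃ k : ℕ, ∃ b ∈ B, (z : K) = (b : K) / lam ^ k := by
  have hz' : z ∈ Ideal.span ((Subring.inclusion (orderGen_le_locSubring lam hlam)) '' B) := hz
  clear hz
  induction hz' using Submodule.span_induction with
  | mem w hw =>
      obtain ⟨b, hb, rfl⟩ := hw
      exact ⟨0, b, hb, by simp [Subring.inclusion]⟩
  | zero => exact ⟨0, 0, zero_mem _, by simp⟩
  | add a b _ _ ha hb =>
      obtain ⟨k1, b1, hb1, h1⟩ := ha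
      obtain ⟨k2, b2, hb2, h2⟩ := hb
      refine ⟨k1 + k2, b1 * ⟨lam ^ k2, pow_mem (lam_mem_orderGen lam) k2⟩
        + b2 * ⟨lam ^ k1, pow_mem (lam_mem_orderGen lam) k1⟩,
        add_mem (B.mul_mem_right _ hb1) (B.mul_mem_right _ hb2), ?_⟩
      have e1 : ((a + b : locSubring lam hlam) : K) = (a : K) + (b : K) := rfl
      have e2 : ((b1 * ⟨lam ^ k2, pow_mem (lam_mem_orderGen lam) k2⟩
          + b2 * ⟨lam ^ k1, pow_mem (lam_mem_orderGen lam) k1⟩ : orderGen lam) : K)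
          = (b1 : K) * lam ^ k2 + (b2 : K) * lam ^ k1 := rfl
      rw [e1, e2, h1, h2]
      field_simp
      ring
  | smul c a _ ha =>
      obtain ⟨k1, b1, hb1, h1⟩ := ha
      obtain ⟨c0, hc0, m, hcm⟩ := c.2
      refine ⟨m + k1, ⟨c0, hc0⟩ * b1, B.mul_mem_left _ hb1, ?_⟩
      have e1 : ((c • a : locSubring lam hlam) : K) = (c : K) * (a : K) := rfl
      have e2 : ((⟨c0, hc0⟩ * b1 : orderGen lam) : K) = c0 * (b1 : K) := rfl
      rw [e1, e2, h1, hcm]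
      field_simp
      ring


set_option synthInstance.maxHeartbeats 1000000 in
set_option maxHeartbeats 1000000 in
/-- Theorem 1 (iii): let `O = ℤ[λ]` be an order in the number field `K` with ring of
integers `O_K`, and let `A`, `B` be nonzero ideals of `O` whose extensions
`𝔄 = O_{(M)}·A` and `𝔅 = O_{(M)}·B` to the localization at powers of `λ` are equivalent
via some `ξ ∈ K^×`.  Then in `Cl(O_K)` the classes of `O_K·A` and `O_K·B` agree modulo
the subgroup generated by the classes of the primes of `O_K` dividing `O_K·λ`. -/
theorem class_congruence_of_extended_ideals_equivalent {K : Type} [Field K] [NumberField K]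
    (lam : K) (hlam : lam ≠ 0) (hint : IsIntegral ℤ lam)
    (hgen : Algebra.adjoin ℚ ({lam} : Set K) = ⊤)
    (f : orderGen lam →+* NumberField.RingOfIntegers K)
    (hf : ∀ a : orderGen lam,
      algebraMap (NumberField.RingOfIntegers K) K (f a) = (a : K))
    (lamO : NumberField.RingOfIntegers K)
    (hlamO : algebraMap (NumberField.RingOfIntegers K) K lamO = lam)
    (A B : Ideal (orderGen lam)) (hA : A ≠ ⊥) (hB : B ≠ ⊥)
    (ξ : K) (hξ : ξ ≠ 0)
    (heq : (fun t => ξ * t) '' idealSet (locSubring lam hlam)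
          (Ideal.map (Subring.inclusion (orderGen_le_locSubring lam hlam)) A) =
        idealSet (locSubring lam hlam)
          (Ideal.map (Subring.inclusion (orderGen_le_locSubring lam hlam)) B)) :
    ∀ (hA' : Ideal.map f A ∈ nonZeroDivisors (Ideal (NumberField.RingOfIntegers K)))
      (hB' : Ideal.map f B ∈ nonZeroDivisors (Ideal (NumberField.RingOfIntegers K))),
      ClassGroup.mk0 ⟨Ideal.map f A, hA'⟩ * (ClassGroup.mk0 ⟨Ideal.map f B, hB'⟩)⁻¹ ∈
        Subgroup.closure {c : ClassGroup (NumberField.RingOfIntegers K) |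
          ∃ Q : Ideal (NumberField.RingOfIntegers K), Q.IsPrime ∧ lamO ∈ Q ∧
            ∃ hQ : Q ∈ nonZeroDivisors (Ideal (NumberField.RingOfIntegers K)),
              c = ClassGroup.mk0 ⟨Q, hQ⟩} := by
  intro hA' hB'
  classical
  have hinj : Function.Injective (algebraMap (NumberField.RingOfIntegers K) K) :=
    IsFractionRing.injective (NumberField.RingOfIntegers K) K
  obtain ⟨u, v, hv, hξuv⟩ :=
    IsFractionRing.div_surjective (A := NumberField.RingOfIntegers K) ξ
  have hvR : v ≠ 0 := mem_nonZeroDivisors_iff_ne_zero.mp hv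
  have hvK : algebraMap (NumberField.RingOfIntegers K) K v ≠ 0 := fun h =>
    hvR (hinj (h.trans (map_zero _).symm))
  have huK : algebraMap (NumberField.RingOfIntegers K) K u ≠ 0 := by
    intro h
    apply hξ
    rw [← hξuv, h, zero_div]
  have huR : u ≠ 0 := fun h => huK (by rw [h, map_zero])
  have hlamO0 : lamO ≠ 0 := fun h => hlam (by rw [← hlamO, h, map_zero])
  have huv : algebraMap (NumberField.RingOfIntegers K) K u =
      ξ * algebraMap (NumberField.RingOfIntegers K) K v := by
    rw [← hξuv]; field_simp
  -- pointwise consequences of `heq`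
  have ptA : ∀ a : orderGen lam, a ∈ A → ∃ k : ℕ, ∃ b ∈ B,
      ξ * (a : K) = (b : K) / lam ^ k := by
    intro a ha
    have himg : ξ * (a : K) ∈ (fun t => ξ * t) '' idealSet (locSubring lam hlam)
        (Ideal.map (Subring.inclusion (orderGen_le_locSubring lam hlam)) A) :=
      ⟨(a : K), ⟨Subring.inclusion (orderGen_le_locSubring lam hlam) a,
        Ideal.mem_map_of_mem _ ha, rfl⟩, rfl⟩
    rw [heq] at himg
    obtain ⟨z, hz, hval⟩ := himg
    obtain ⟨k, b, hb, hzv⟩ := mem_map_loc hlam B z hz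
    exact ⟨k, b, hb, by rw [← hval, hzv]⟩
  have ptB : ∀ b : orderGen lam, b ∈ B → ∃ k : ℕ, ∃ a ∈ A,
      (b : K) = ξ * ((a : K) / lam ^ k) := by
    intro b hb
    have himg : (b : K) ∈ idealSet (locSubring lam hlam)
        (Ideal.map (Subring.inclusion (orderGen_le_locSubring lam hlam)) B) :=
      ⟨Subring.inclusion (orderGen_le_locSubring lam hlam) b,
        Ideal.mem_map_of_mem _ hb, rfl⟩
    rw [← heq] at himg
    obtain ⟨t, ht, hteq⟩ := himg
    obtain ⟨z, hz, hval⟩ := ht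
    obtain ⟨k, a, ha, hzv⟩ := mem_map_loc hlam A z hz
    exact ⟨k, a, ha, by rw [← hteq, ← hval, hzv]⟩
  -- transfer to O_K
  have satA : ∀ a : orderGen lam, a ∈ A →
      u * f a ∈ idealSat lamO (Ideal.span {v} * Ideal.map f B) := by
    intro a ha
    obtain ⟨k, b, hb, hk⟩ := ptA a ha
    refine ⟨k, ?_⟩
    have h1 : lam ^ k * (algebraMap (NumberField.RingOfIntegers K) K u * (a : K)) =
        algebraMap (NumberField.RingOfIntegers K) K v * (b : K) := by
      rw [huv, show lam ^ k * (ξ * algebraMap (NumberField.RingOfIntegers K) K v * (a : K))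
          = algebraMap (NumberField.RingOfIntegers K) K v * (ξ * (a : K)) * lam ^ k from by
          ring, hk]
      field_simp
    have hKeq : algebraMap (NumberField.RingOfIntegers K) K (lamO ^ k * (u * f a)) =
        algebraMap (NumberField.RingOfIntegers K) K (v * f b) := by
      simp only [map_mul, map_pow, hlamO, hf]
      exact h1
    have hR : lamO ^ k * (u * f a) = v * f b := hinj hKeq
    rw [hR]
    exact Ideal.mul_mem_mul (Ideal.mem_span_singleton_self v) (Ideal.mem_map_of_mem f hb)
  have satB : ∀ b : orderGen lam, b ∈ B →
      v * f b ∈ idealSat lamO (Ideal.span {u} * Ideal.map f A) := by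
    intro b hb
    obtain ⟨k, a, ha, hk⟩ := ptB b hb
    refine ⟨k, ?_⟩
    have h1 : lam ^ k * (algebraMap (NumberField.RingOfIntegers K) K v * (b : K)) =
        algebraMap (NumberField.RingOfIntegers K) K u * (a : K) := by
      rw [hk, huv]
      field_simp
    have hKeq : algebraMap (NumberField.RingOfIntegers K) K (lamO ^ k * (v * f b)) =
        algebraMap (NumberField.RingOfIntegers K) K (u * f a) := by
      simp only [map_mul, map_pow, hlamO, hf]
      exact h1
    have hR : lamO ^ k * (v * f b) = u * f a := hinj hKeq
    rw [hR]
    exact Ideal.mul_mem_mul (Ideal.mem_span_singleton_self u) (Ideal.mem_map_of_mem f ha)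
  -- uniform exponents
  obtain ⟨N, hN⟩ := idealSat_uniform lamO (Ideal.span {v} * Ideal.map f B)
  obtain ⟨M, hM⟩ := idealSat_uniform lamO (Ideal.span {u} * Ideal.map f A)
  have claimA : ∀ s ∈ Ideal.map f A,
      u * s ∈ idealSat lamO (Ideal.span {v} * Ideal.map f B) := by
    intro s hs
    have hs' : s ∈ Ideal.span (f '' A) := hs
    clear hs
    induction hs' using Submodule.span_induction with
    | mem w hw =>
        obtain ⟨a, ha, rfl⟩ := hw
        exact satA a ha
    | zero => rw [mul_zero]; exact zero_mem _
    | add a b _ _ ha hb => rw [mul_add]; exact add_mem ha hb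
    | smul c a _ ha =>
        rw [smul_eq_mul, show u * (c * a) = c * (u * a) from by ring]
        exact Ideal.mul_mem_left _ _ ha
  have claimB : ∀ s ∈ Ideal.map f B,
      v * s ∈ idealSat lamO (Ideal.span {u} * Ideal.map f A) := by
    intro s hs
    have hs' : s ∈ Ideal.span (f '' B) := hs
    clear hs
    induction hs' using Submodule.span_induction with
    | mem w hw =>
        obtain ⟨b, hb, rfl⟩ := hw
        exact satB b hb
    | zero => rw [mul_zero]; exact zero_mem _
    | add a b _ _ ha hb => rw [mul_add]; exact add_mem ha hb
    | smul c a _ ha =>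
        rw [smul_eq_mul, show v * (c * a) = c * (v * a) from by ring]
        exact Ideal.mul_mem_left _ _ ha
  have hIncl1 : Ideal.span {lamO ^ N * u} * Ideal.map f A ≤
      Ideal.span {v} * Ideal.map f B := by
    rw [Ideal.span_singleton_mul_le_iff]
    intro s hs
    rw [show lamO ^ N * u * s = lamO ^ N * (u * s) from by ring]
    exact hN _ (claimA s hs)
  have hIncl2 : Ideal.span {lamO ^ M * v} * Ideal.map f B ≤
      Ideal.span {u} * Ideal.map f A := by
    rw [Ideal.span_singleton_mul_le_iff]
    intro s hs
    rw [show lamO ^ M * v * s = lamO ^ M * (v * s) from by ring]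
    exact hM _ (claimB s hs)
  obtain ⟨C₁, hC₁⟩ := Ideal.dvd_iff_le.mpr hIncl1
  obtain ⟨C₂, hC₂⟩ := Ideal.dvd_iff_le.mpr hIncl2
  have hI0 : Ideal.map f A ≠ 0 := mem_nonZeroDivisors_iff_ne_zero.mp hA'
  have hJ0 : Ideal.map f B ≠ 0 := mem_nonZeroDivisors_iff_ne_zero.mp hB'
  have hspan : ∀ x : NumberField.RingOfIntegers K, x ≠ 0 →
      Ideal.span {x} ≠ (0 : Ideal (NumberField.RingOfIntegers K)) := fun x hx h =>
    hx (by rwa [Ideal.zero_eq_bot, Ideal.span_singleton_eq_bot] at h)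
  have expand : Ideal.span {lamO ^ (N + M)} *
        (Ideal.span {u} * Ideal.map f A * (Ideal.span {v} * Ideal.map f B)) =
      (Ideal.span {lamO ^ N * u} * Ideal.map f A) *
        (Ideal.span {lamO ^ M * v} * Ideal.map f B) := by
    rw [pow_add, ← Ideal.span_singleton_mul_span_singleton,
      ← Ideal.span_singleton_mul_span_singleton, ← Ideal.span_singleton_mul_span_singleton]
    ring
  have key : Ideal.span {lamO ^ (N + M)} *
        (Ideal.span {u} * Ideal.map f A * (Ideal.span {v} * Ideal.map f B)) =
      (C₁ * C₂) *
        (Ideal.span {u} * Ideal.map f A * (Ideal.span {v} * Ideal.map f B)) := by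
    rw [expand, hC₁, hC₂]
    ring
  have hD0 : Ideal.span {u} * Ideal.map f A * (Ideal.span {v} * Ideal.map f B) ≠ 0 :=
    mul_ne_zero (mul_ne_zero (hspan u huR) hI0) (mul_ne_zero (hspan v hvR) hJ0)
  have hfac : Ideal.span {lamO ^ (N + M)} = C₁ * C₂ := mul_right_cancel₀ hD0 key
  have hsnu : Ideal.span {lamO ^ N * u} ≠ (0 : Ideal (NumberField.RingOfIntegers K)) :=
    hspan _ (mul_ne_zero (pow_ne_zero N hlamO0) huR)
  have hC₁0 : C₁ ≠ 0 := by
    intro h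
    rw [h, mul_zero] at hC₁
    exact mul_ne_zero hsnu hI0 hC₁
  have hC₁mem : C₁ ∈ nonZeroDivisors (Ideal (NumberField.RingOfIntegers K)) :=
    mem_nonZeroDivisors_iff_ne_zero.mpr hC₁0
  have hclosure := mk0_mem_closure_of_dvd_span_pow lamO (N + M) C₁ ⟨C₂, hfac⟩ hC₁mem
  have hmemP1 : Ideal.span {lamO ^ N * u} ∈
      nonZeroDivisors (Ideal (NumberField.RingOfIntegers K)) :=
    mem_nonZeroDivisors_iff_ne_zero.mpr hsnu
  have hmemP2 : Ideal.span {v} ∈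
      nonZeroDivisors (Ideal (NumberField.RingOfIntegers K)) :=
    mem_nonZeroDivisors_iff_ne_zero.mpr (hspan v hvR)
  have hprod : (⟨Ideal.span {lamO ^ N * u}, hmemP1⟩ :
        ↥(nonZeroDivisors (Ideal (NumberField.RingOfIntegers K)))) * ⟨Ideal.map f A, hA'⟩ =
      ⟨Ideal.span {v}, hmemP2⟩ * ⟨Ideal.map f B, hB'⟩ * ⟨C₁, hC₁mem⟩ :=
    Subtype.ext hC₁
  have hmk := congrArg ClassGroup.mk0 hprod
  rw [map_mul, map_mul, map_mul] at hmk
  have h1 : ClassGroup.mk0 (⟨Ideal.span {lamO ^ N * u}, hmemP1⟩ :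
      ↥(nonZeroDivisors (Ideal (NumberField.RingOfIntegers K)))) = 1 :=
    (ClassGroup.mk0_eq_one_iff hmemP1).mpr ⟨⟨_, rfl⟩⟩
  have h2 : ClassGroup.mk0 (⟨Ideal.span {v}, hmemP2⟩ :
      ↥(nonZeroDivisors (Ideal (NumberField.RingOfIntegers K)))) = 1 :=
    (ClassGroup.mk0_eq_one_iff hmemP2).mpr ⟨⟨_, rfl⟩⟩
  rw [h1, h2, one_mul, one_mul] at hmk
  have hgoal : ClassGroup.mk0 (⟨Ideal.map f A, hA'⟩ :
        ↥(nonZeroDivisors (Ideal (NumberField.RingOfIntegers K)))) *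
      (ClassGroup.mk0 ⟨Ideal.map f B, hB'⟩)⁻¹ = ClassGroup.mk0 ⟨C₁, hC₁mem⟩ := by
    rw [hmk, mul_comm (ClassGroup.mk0 ⟨Ideal.map f B, hB'⟩) (ClassGroup.mk0 ⟨C₁, hC₁mem⟩),
      mul_assoc, mul_inv_cancel, mul_one]
  rw [hgoal]
  exact hclosure


end
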